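/- Let v1,v2,v3,v4 ∈ ℝ² form a convex quadrilateral in counterclockwise cyclic order, let Q be their convex hull, and let p lie in the interior of Q. Then the 4×4 matrix whose first two rows are the first and second coordinates of (v1,v2,v3,v4), whose third row is (1,1,1,1), and whose fourth row is (ρ1(p), −ρ2(p), ρ3(p), −ρ4(p)), is invertible, and the unique solution of the linear system with right-hand side (p1, p2, 1, 0) is the vector of Wachspress coordinates (φ1(p), φ2(p), φ3(p), φ4(p)). -/

import Mathlib

open Matrix

/-- Signed area of the triangle `(a,b,c)` in the plane. -/
noncomputable def sArea (a b c : EuclideanSpace ℝ (Fin 2)) : ℝ :=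
  ((b 0 - a 0) * (c 1 - a 1) - (b 1 - a 1) * (c 0 - a 0)) / 2

/-- `v` lists the vertices of a convex quadrilateral in counterclockwise cyclic order. -/
def ConvexCCW (v : Fin 4 → EuclideanSpace ℝ (Fin 2)) : Prop :=
  ∀ i : Fin 4, 0 < sArea (v i) (v (i + 1)) (v (i + 2))

/-- `hdist v i p`: Euclidean distance from `p` to the line through `v i` and `v (i+1)`. -/
noncomputable def hdist (v : Fin 4 → EuclideanSpace ℝ (Fin 2)) (i : Fin 4)
    (p : EuclideanSpace ℝ (Fin 2)) : ℝ :=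
  Metric.infDist p (affineSpan ℝ {v i, v (i + 1)} : Set (EuclideanSpace ℝ (Fin 2)))

/-- `ρᵢ(p) = l_{i,i-1} l_{i,i+1} h_{i-1}(p) h_i(p)`. -/
noncomputable def rho (v : Fin 4 → EuclideanSpace ℝ (Fin 2)) (i : Fin 4)
    (p : EuclideanSpace ℝ (Fin 2)) : ℝ :=
  ‖v i - v (i - 1)‖ * ‖v i - v (i + 1)‖ * hdist v (i - 1) p * hdist v i p

/-- Wachspress weight `wᵢ(p) = S(v_{i-1},v_i,v_{i+1}) / (S(p,v_{i-1},v_i) S(p,v_i,v_{i+1}))`. -/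
noncomputable def wWach (v : Fin 4 → EuclideanSpace ℝ (Fin 2)) (i : Fin 4)
    (p : EuclideanSpace ℝ (Fin 2)) : ℝ :=
  sArea (v (i - 1)) (v i) (v (i + 1)) /
    (sArea p (v (i - 1)) (v i) * sArea p (v i) (v (i + 1)))

/-- Wachspress coordinate `φᵢ(p) = wᵢ(p) / (w₁(p)+w₂(p)+w₃(p)+w₄(p))`. -/
noncomputable def wach (v : Fin 4 → EuclideanSpace ℝ (Fin 2)) (i : Fin 4)
    (p : EuclideanSpace ℝ (Fin 2)) : ℝ :=
  wWach v i p / (wWach v 0 p + wWach v 1 p + wWach v 2 p + wWach v 3 p)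

/- ### Auxiliary lemmas -/

lemma euclid_dist (x y : EuclideanSpace ℝ (Fin 2)) :
    dist x y = Real.sqrt ((x 0 - y 0)^2 + (x 1 - y 1)^2) := by
  rw [EuclideanSpace.dist_eq, Fin.sum_univ_two]
  norm_num [Real.dist_eq, sq_abs]

lemma euclid_norm (x : EuclideanSpace ℝ (Fin 2)) :
    ‖x‖ = Real.sqrt ((x 0)^2 + (x 1)^2) := by
  rw [EuclideanSpace.norm_eq, Fin.sum_univ_two]
  norm_num [sq_abs]

lemma infDist_line (a b p : EuclideanSpace ℝ (Fin 2))
    (hab : (b 0 - a 0)^2 + (b 1 - a 1)^2 ≠ 0) :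
    Metric.infDist p (affineSpan ℝ {a, b} : Set (EuclideanSpace ℝ (Fin 2)))
      = |(b 0 - a 0) * (p 1 - a 1) - (b 1 - a 1) * (p 0 - a 0)| / ‖b - a‖ := by
  set d0 := b 0 - a 0 with hd0
  set d1 := b 1 - a 1 with hd1
  set x0 := p 0 - a 0 with hx0
  set x1 := p 1 - a 1 with hx1
  have hn2 : 0 < d0^2 + d1^2 := lt_of_le_of_ne (by positivity) (Ne.symm hab)
  have hnorm : ‖b - a‖ = Real.sqrt (d0^2 + d1^2) := by
    rw [euclid_norm]; simp [hd0, hd1]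
  have hmem : ∀ t : ℝ, t • (b -ᵥ a) +ᵥ a ∈ (affineSpan ℝ {a, b} : Set (EuclideanSpace ℝ (Fin 2))) :=
    fun t => smul_vsub_vadd_mem_affineSpan_pair t a b
  have happ : ∀ (t : ℝ) (i : Fin 2), (t • (b -ᵥ a) +ᵥ a) i = t * (b i - a i) + a i := by
    intro t i
    simp [PiLp.smul_apply, PiLp.sub_apply, smul_eq_mul]
  have hdist : ∀ t : ℝ, dist p (t • (b -ᵥ a) +ᵥ a)
      = Real.sqrt ((x0 - t * d0)^2 + (x1 - t * d1)^2) := by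
    intro t
    rw [euclid_dist, happ, happ]
    congr 1; ring
  have hRHS : |d0 * x1 - d1 * x0| / ‖b - a‖
      = Real.sqrt ((d0 * x1 - d1 * x0)^2 / (d0^2 + d1^2)) := by
    rw [hnorm, Real.sqrt_div (sq_nonneg _), Real.sqrt_sq_eq_abs]
  rw [hRHS]
  apply le_antisymm
  · set t : ℝ := (x0 * d0 + x1 * d1) / (d0^2 + d1^2) with ht
    refine le_trans (Metric.infDist_le_dist_of_mem (hmem t)) ?_
    rw [hdist t]
    apply le_of_eq
    congr 1
    rw [ht]
    field_simp
    ring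
  · by_contra hlt
    push_neg at hlt
    obtain ⟨y, hy, hylt⟩ := (Metric.infDist_lt_iff ⟨a, left_mem_affineSpan_pair ℝ a b⟩).1 hlt
    have : (y -ᵥ a) +ᵥ a ∈ line[ℝ, a, b] := by simpa using hy
    obtain ⟨t, hty⟩ := (vadd_left_mem_affineSpan_pair).1 this
    have hy' : y = t • (b -ᵥ a) +ᵥ a := by
      rw [hty]; simp
    rw [hy', hdist t] at hylt
    have hle : (d0 * x1 - d1 * x0)^2 / (d0^2 + d1^2) ≤ (x0 - t * d0)^2 + (x1 - t * d1)^2 := by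
      rw [div_le_iff₀ hn2]
      nlinarith [sq_nonneg (x0 * d0 + x1 * d1 - t * (d0^2 + d1^2))]
    exact absurd (Real.sqrt_le_sqrt hle) (not_le.2 hylt)

lemma sArea_pos_interior (q0 q1 q2 q3 p : EuclideanSpace ℝ (Fin 2))
    (h2 : 0 < sArea q0 q1 q2) (h3 : 0 < sArea q0 q1 q3)
    (hp : p ∈ interior (convexHull ℝ {q0, q1, q2, q3})) :
    0 < sArea p q0 q1 := by
  set c0 : ℝ := q0 1 - q1 1 with hc0
  set c1 : ℝ := q1 0 - q0 0 with hc1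
  have hf : ∀ x : EuclideanSpace ℝ (Fin 2),
      sArea x q0 q1 = (c0 * (x 0 - q0 0) + c1 * (x 1 - q0 1)) / 2 := by
    intro x; simp only [sArea, hc0, hc1]; ring
  have hC : Convex ℝ {x : EuclideanSpace ℝ (Fin 2) | 0 ≤ sArea x q0 q1} := by
    intro x hx y hy s t hs ht hst
    simp only [Set.mem_setOf_eq, hf] at *
    have e0 : (s • x + t • y) 0 = s * x 0 + t * y 0 := by
      simp [PiLp.add_apply, PiLp.smul_apply, smul_eq_mul]
    have e1 : (s • x + t • y) 1 = s * x 1 + t * y 1 := by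
      simp [PiLp.add_apply, PiLp.smul_apply, smul_eq_mul]
    rw [e0, e1]
    have ht' : t = 1 - s := by linarith
    rw [ht']
    nlinarith [mul_nonneg hs hx, mul_nonneg (by linarith : (0:ℝ) ≤ 1 - s) hy]
  have hsub : convexHull ℝ {q0, q1, q2, q3} ⊆ {x : EuclideanSpace ℝ (Fin 2) | 0 ≤ sArea x q0 q1} := by
    apply convexHull_min _ hC
    intro x hx
    simp only [Set.mem_insert_iff, Set.mem_singleton_iff] at hx
    rcases hx with rfl | rfl | rfl | rfl
    · simp only [Set.mem_setOf_eq, hf]; nlinarith []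
    · simp only [Set.mem_setOf_eq, hf]; nlinarith []
    · simp only [Set.mem_setOf_eq]
      have : sArea x q0 q1 = sArea q0 q1 x := by simp only [sArea]; ring
      rw [this]; exact le_of_lt h2
    · simp only [Set.mem_setOf_eq]
      have : sArea x q0 q1 = sArea q0 q1 x := by simp only [sArea]; ring
      rw [this]; exact le_of_lt h3
  have hge : 0 ≤ sArea p q0 q1 := hsub (interior_subset hp)
  rcases lt_or_eq_of_le hge with h | h
  · exact h
  exfalso
  obtain ⟨ε, hε, hball⟩ := Metric.mem_nhds_iff.1 (mem_interior_iff_mem_nhds.1 hp)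
  have hcc : 0 < c0^2 + c1^2 := by
    have h2' := h2
    simp only [sArea, hc0, hc1] at h2' ⊢
    nlinarith [sq_nonneg ((q0 1 - q1 1) * (q2 1 - q0 1) - (q1 0 - q0 0) * (q2 0 - q0 0)),
      sq_nonneg (q2 0 - q0 0), sq_nonneg (q2 1 - q0 1)]
  set u : EuclideanSpace ℝ (Fin 2) := (WithLp.equiv 2 (Fin 2 → ℝ)).symm ![c0, c1] with hu
  have hu0 : u 0 = c0 := rfl
  have hu1 : u 1 = c1 := rfl
  set t : ℝ := ε / (2 * (‖u‖ + 1)) with htdef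
  have hupos : 0 < ‖u‖ + 1 := by positivity
  have htpos : 0 < t := by positivity
  have hx : p - t • u ∈ Metric.ball p ε := by
    rw [Metric.mem_ball, dist_eq_norm]
    have : p - t • u - p = -(t • u) := by abel
    rw [this, norm_neg, norm_smul, Real.norm_eq_abs, abs_of_pos htpos]
    calc t * ‖u‖ < t * (‖u‖ + 1) := by nlinarith
    _ = ε / 2 := by rw [htdef]; field_simp
    _ < ε := by linarith
  have hmem := hsub (hball hx)
  simp only [Set.mem_setOf_eq, hf] at hmem
  have e0 : (p - t • u) 0 = p 0 - t * c0 := by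
    simp [PiLp.sub_apply, PiLp.smul_apply, smul_eq_mul, hu0]
  have e1 : (p - t • u) 1 = p 1 - t * c1 := by
    simp [PiLp.sub_apply, PiLp.smul_apply, smul_eq_mul, hu1]
  rw [e0, e1] at hmem
  have h0 := hf p
  rw [← h] at h0
  have hp2 : 0 < t * (c0^2 + c1^2) := mul_pos htpos hcc
  clear_value t u c0 c1
  nlinarith [hp2, hmem, h0]

lemma sArea_cyc (a b c : EuclideanSpace ℝ (Fin 2)) : sArea a b c = sArea b c a := by
  simp only [sArea]; ring

lemma nondeg {a b c : EuclideanSpace ℝ (Fin 2)} (h : 0 < sArea a b c) :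
    (b 0 - a 0)^2 + (b 1 - a 1)^2 ≠ 0 := by
  intro heq
  simp only [sArea] at h
  nlinarith [sq_nonneg ((b 0 - a 0) * (c 0 - a 0) + (b 1 - a 1) * (c 1 - a 1)),
    sq_nonneg (c 0 - a 0), sq_nonneg (c 1 - a 1), sq_nonneg (b 0 - a 0), sq_nonneg (b 1 - a 1)]

lemma norm_pos_nd {a b : EuclideanSpace ℝ (Fin 2)}
    (h : (b 0 - a 0)^2 + (b 1 - a 1)^2 ≠ 0) : 0 < ‖b - a‖ := by
  rw [euclid_norm]
  have h1 : (b - a) 0 = b 0 - a 0 := by simp [PiLp.sub_apply]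
  have h2 : (b - a) 1 = b 1 - a 1 := by simp [PiLp.sub_apply]
  rw [h1, h2]
  have : 0 < (b 0 - a 0)^2 + (b 1 - a 1)^2 := lt_of_le_of_ne (by positivity) (Ne.symm h)
  positivity

lemma det_fin_four' (M : Matrix (Fin 4) (Fin 4) ℝ) :
    M.det =
      M 0 0 * (M 1 1 * (M 2 2 * M 3 3 - M 2 3 * M 3 2) - M 1 2 * (M 2 1 * M 3 3 - M 2 3 * M 3 1)
        + M 1 3 * (M 2 1 * M 3 2 - M 2 2 * M 3 1))
    - M 0 1 * (M 1 0 * (M 2 2 * M 3 3 - M 2 3 * M 3 2) - M 1 2 * (M 2 0 * M 3 3 - M 2 3 * M 3 0)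
        + M 1 3 * (M 2 0 * M 3 2 - M 2 2 * M 3 0))
    + M 0 2 * (M 1 0 * (M 2 1 * M 3 3 - M 2 3 * M 3 1) - M 1 1 * (M 2 0 * M 3 3 - M 2 3 * M 3 0)
        + M 1 3 * (M 2 0 * M 3 1 - M 2 1 * M 3 0))
    - M 0 3 * (M 1 0 * (M 2 1 * M 3 2 - M 2 2 * M 3 1) - M 1 1 * (M 2 0 * M 3 2 - M 2 2 * M 3 0)
        + M 1 2 * (M 2 0 * M 3 1 - M 2 1 * M 3 0)) := by
  rw [Matrix.det_succ_row_zero]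
  simp [Fin.sum_univ_succ, Matrix.det_fin_three, Matrix.submatrix_apply,
    show ((2:Fin 3).succ : Fin 4) = 3 by decide,
    show Fin.succAbove (1:Fin 4) 2 = 3 by decide,
    show Fin.succAbove (2:Fin 4) 2 = 3 by decide,
    show Fin.castSucc (2:Fin 3) = (2:Fin 4) by decide,
    show Fin.succAbove (3:Fin 4) 2 = 2 by decide,
    show Fin.succAbove (0:Fin 4) 2 = 3 by decide,
    show Fin.succAbove (0:Fin 4) 1 = 2 by decide,
    show Fin.succAbove (1:Fin 4) 1 = 2 by decide,
    show Fin.succAbove (2:Fin 4) 1 = 1 by decide,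
    show Fin.succAbove (3:Fin 4) 1 = 1 by decide,
    show Fin.succAbove (0:Fin 4) 0 = 1 by decide,
    show Fin.succAbove (1:Fin 4) 0 = 0 by decide,
    show Fin.succAbove (2:Fin 4) 0 = 0 by decide,
    show Fin.succAbove (3:Fin 4) 0 = 0 by decide]
  ring

set_option maxHeartbeats 4000000 in
theorem wachspress_linear_system (v : Fin 4 → EuclideanSpace ℝ (Fin 2))
    (hccw : ConvexCCW v) (p : EuclideanSpace ℝ (Fin 2))
    (hp : p ∈ interior (convexHull ℝ {v 0, v 1, v 2, v 3})) :
    IsUnit (Matrix.of ![fun i => v i 0, fun i => v i 1, fun i => (1 : ℝ),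
        ![rho v 0 p, -rho v 1 p, rho v 2 p, -rho v 3 p]] : Matrix (Fin 4) (Fin 4) ℝ) ∧
    (Matrix.of ![fun i => v i 0, fun i => v i 1, fun i => (1 : ℝ),
        ![rho v 0 p, -rho v 1 p, rho v 2 p, -rho v 3 p]] :
          Matrix (Fin 4) (Fin 4) ℝ).mulVec (fun i => wach v i p) =
      ![p 0, p 1, 1, 0] := by
  -- normalized counterclockwise facts
  have H0 : 0 < sArea (v 0) (v 1) (v 2) := by
    have := hccw 0
    rwa [show (0:Fin 4)+1 = 1 by decide, show (0:Fin 4)+2 = 2 by decide] at this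
  have H1 : 0 < sArea (v 1) (v 2) (v 3) := by
    have := hccw 1
    rwa [show (1:Fin 4)+1 = 2 by decide, show (1:Fin 4)+2 = 3 by decide] at this
  have H2 : 0 < sArea (v 2) (v 3) (v 0) := by
    have := hccw 2
    rwa [show (2:Fin 4)+1 = 3 by decide, show (2:Fin 4)+2 = 0 by decide] at this
  have H3 : 0 < sArea (v 3) (v 0) (v 1) := by
    have := hccw 3
    rwa [show (3:Fin 4)+1 = 0 by decide, show (3:Fin 4)+2 = 1 by decide] at this
  -- nondegeneracy of edges
  have nd0 := nondeg H0
  have nd1 := nondeg H1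
  have nd2 := nondeg H2
  have nd3 := nondeg H3
  -- positivity of the triangle areas at p
  have hS0 : 0 < sArea p (v 0) (v 1) :=
    sArea_pos_interior (v 0) (v 1) (v 2) (v 3) p H0 (by rwa [sArea_cyc] at H3) hp
  have hS1 : 0 < sArea p (v 1) (v 2) := by
    have hset : ({v 1, v 2, v 3, v 0} : Set (EuclideanSpace ℝ (Fin 2))) = {v 0, v 1, v 2, v 3} := by
      ext x; simp only [Set.mem_insert_iff, Set.mem_singleton_iff]; tauto
    exact sArea_pos_interior (v 1) (v 2) (v 3) (v 0) p H1 (by rwa [sArea_cyc] at H0)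
      (by rwa [hset])
  have hS2 : 0 < sArea p (v 2) (v 3) := by
    have hset : ({v 2, v 3, v 0, v 1} : Set (EuclideanSpace ℝ (Fin 2))) = {v 0, v 1, v 2, v 3} := by
      ext x; simp only [Set.mem_insert_iff, Set.mem_singleton_iff]; tauto
    exact sArea_pos_interior (v 2) (v 3) (v 0) (v 1) p H2 (by rwa [sArea_cyc] at H1)
      (by rwa [hset])
  have hS3 : 0 < sArea p (v 3) (v 0) := by
    have hset : ({v 3, v 0, v 1, v 2} : Set (EuclideanSpace ℝ (Fin 2))) = {v 0, v 1, v 2, v 3} := by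
      ext x; simp only [Set.mem_insert_iff, Set.mem_singleton_iff]; tauto
    exact sArea_pos_interior (v 3) (v 0) (v 1) (v 2) p H3 (by rwa [sArea_cyc] at H2)
      (by rwa [hset])
  set S0 := sArea p (v 0) (v 1) with hS0def
  set S1 := sArea p (v 1) (v 2) with hS1def
  set S2 := sArea p (v 2) (v 3) with hS2def
  set S3 := sArea p (v 3) (v 0) with hS3def
  set A0 := sArea (v 3) (v 0) (v 1) with hA0def
  set A1 := sArea (v 0) (v 1) (v 2) with hA1def
  set A2 := sArea (v 1) (v 2) (v 3) with hA2def
  set A3 := sArea (v 2) (v 3) (v 0) with hA3def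
  clear_value S0 S1 S2 S3 A0 A1 A2 A3
  -- distances to the four edge lines
  have hd0 : hdist v 0 p = 2 * S0 / ‖v 1 - v 0‖ := by
    rw [hdist, show (0:Fin 4)+1 = 1 by decide, infDist_line _ _ _ nd0]
    rw [show (v 1 0 - v 0 0) * (p 1 - v 0 1) - (v 1 1 - v 0 1) * (p 0 - v 0 0) = 2 * S0 by
      rw [hS0def]; simp only [sArea]; ring]
    rw [abs_of_pos (by positivity)]
  have hd1 : hdist v 1 p = 2 * S1 / ‖v 2 - v 1‖ := by
    rw [hdist, show (1:Fin 4)+1 = 2 by decide, infDist_line _ _ _ nd1]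
    rw [show (v 2 0 - v 1 0) * (p 1 - v 1 1) - (v 2 1 - v 1 1) * (p 0 - v 1 0) = 2 * S1 by
      rw [hS1def]; simp only [sArea]; ring]
    rw [abs_of_pos (by positivity)]
  have hd2 : hdist v 2 p = 2 * S2 / ‖v 3 - v 2‖ := by
    rw [hdist, show (2:Fin 4)+1 = 3 by decide, infDist_line _ _ _ nd2]
    rw [show (v 3 0 - v 2 0) * (p 1 - v 2 1) - (v 3 1 - v 2 1) * (p 0 - v 2 0) = 2 * S2 by
      rw [hS2def]; simp only [sArea]; ring]
    rw [abs_of_pos (by positivity)]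
  have hd3 : hdist v 3 p = 2 * S3 / ‖v 0 - v 3‖ := by
    rw [hdist, show (3:Fin 4)+1 = 0 by decide, infDist_line _ _ _ nd3]
    rw [show (v 0 0 - v 3 0) * (p 1 - v 3 1) - (v 0 1 - v 3 1) * (p 0 - v 3 0) = 2 * S3 by
      rw [hS3def]; simp only [sArea]; ring]
    rw [abs_of_pos (by positivity)]
  -- norms are positive
  have np0 : 0 < ‖v 1 - v 0‖ := norm_pos_nd nd0
  have np1 : 0 < ‖v 2 - v 1‖ := norm_pos_nd nd1
  have np2 : 0 < ‖v 3 - v 2‖ := norm_pos_nd nd2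
  have np3 : 0 < ‖v 0 - v 3‖ := norm_pos_nd nd3
  -- rho in terms of areas
  have hrho0 : rho v 0 p = 4 * (S3 * S0) := by
    rw [rho, show (0:Fin 4)-1 = 3 by decide, show (0:Fin 4)+1 = 1 by decide, hd3, hd0,
      show ‖v 0 - v 3‖ = ‖v 0 - v 3‖ from rfl, norm_sub_rev (v 0) (v 1)]
    field_simp
    ring
  have hrho1 : rho v 1 p = 4 * (S0 * S1) := by
    rw [rho, show (1:Fin 4)-1 = 0 by decide, show (1:Fin 4)+1 = 2 by decide, hd0, hd1,
      norm_sub_rev (v 1) (v 2)]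
    field_simp
    ring
  have hrho2 : rho v 2 p = 4 * (S1 * S2) := by
    rw [rho, show (2:Fin 4)-1 = 1 by decide, show (2:Fin 4)+1 = 3 by decide, hd1, hd2,
      norm_sub_rev (v 2) (v 3)]
    field_simp
    ring
  have hrho3 : rho v 3 p = 4 * (S2 * S3) := by
    rw [rho, show (3:Fin 4)-1 = 2 by decide, show (3:Fin 4)+1 = 0 by decide, hd2, hd3,
      norm_sub_rev (v 3) (v 0)]
    field_simp
    ring
  -- weights in terms of areas
  have hw0 : wWach v 0 p = A0 / (S3 * S0) := by
    rw [wWach, show (0:Fin 4)-1 = 3 by decide, show (0:Fin 4)+1 = 1 by decide,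
      ← hA0def, ← hS3def, ← hS0def]
  have hw1 : wWach v 1 p = A1 / (S0 * S1) := by
    rw [wWach, show (1:Fin 4)-1 = 0 by decide, show (1:Fin 4)+1 = 2 by decide,
      ← hA1def, ← hS0def, ← hS1def]
  have hw2 : wWach v 2 p = A2 / (S1 * S2) := by
    rw [wWach, show (2:Fin 4)-1 = 1 by decide, show (2:Fin 4)+1 = 3 by decide,
      ← hA2def, ← hS1def, ← hS2def]
  have hw3 : wWach v 3 p = A3 / (S2 * S3) := by
    rw [wWach, show (3:Fin 4)-1 = 2 by decide, show (3:Fin 4)+1 = 0 by decide,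
      ← hA3def, ← hS2def, ← hS3def]
  have hA0 : 0 < A0 := H3
  have hA1 : 0 < A1 := H0
  have hA2 : 0 < A2 := H1
  have hA3 : 0 < A3 := H2
  set N := A0 * S1 * S2 + A1 * S2 * S3 + A2 * S3 * S0 + A3 * S0 * S1 with hNdef
  have hN : 0 < N := by rw [hNdef]; positivity
  clear_value N
  -- Wachspress coordinates in closed form
  have hwach0 : wach v 0 p = A0 * S1 * S2 / N := by
    rw [wach, hw0, hw1, hw2, hw3, hNdef]
    rw [div_eq_div_iff (by positivity) (by positivity)]
    field_simp
  have hwach1 : wach v 1 p = A1 * S2 * S3 / N := by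
    rw [wach, hw0, hw1, hw2, hw3, hNdef]
    rw [div_eq_div_iff (by positivity) (by positivity)]
    field_simp
  have hwach2 : wach v 2 p = A2 * S3 * S0 / N := by
    rw [wach, hw0, hw1, hw2, hw3, hNdef]
    rw [div_eq_div_iff (by positivity) (by positivity)]
    field_simp
  have hwach3 : wach v 3 p = A3 * S0 * S1 / N := by
    rw [wach, hw0, hw1, hw2, hw3, hNdef]
    rw [div_eq_div_iff (by positivity) (by positivity)]
    field_simp
  set M : Matrix (Fin 4) (Fin 4) ℝ := Matrix.of ![fun i => v i 0, fun i => v i 1, fun i => (1 : ℝ),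
        ![rho v 0 p, -rho v 1 p, rho v 2 p, -rho v 3 p]] with hM
  have e0 : ∀ j, M 0 j = v j 0 := fun j => rfl
  have e1 : ∀ j, M 1 j = v j 1 := fun j => rfl
  have e2 : ∀ j, M 2 j = 1 := fun j => rfl
  have e30 : M 3 0 = rho v 0 p := rfl
  have e31 : M 3 1 = -rho v 1 p := rfl
  have e32 : M 3 2 = rho v 2 p := rfl
  have e33 : M 3 3 = -rho v 3 p := rfl
  have hmv : ∀ x : Fin 4 → ℝ, ∀ j, M.mulVec x j
      = M j 0 * x 0 + M j 1 * x 1 + M j 2 * x 2 + M j 3 * x 3 := by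
    intro x j
    simp [Matrix.mulVec, dotProduct, Fin.sum_univ_four]
  clear_value M
  constructor
  · -- invertibility via the determinant
    rw [Matrix.isUnit_iff_isUnit_det]
    have hdet : M.det = -8 * N := by
      rw [det_fin_four', e0, e0, e0, e0, e1, e1, e1, e1, e2, e2, e2, e2, e30, e31, e32, e33,
        hrho0, hrho1, hrho2, hrho3, hNdef, hA0def, hA1def, hA2def, hA3def,
        hS0def, hS1def, hS2def, hS3def]
      simp only [sArea]
      ring
    rw [hdet]
    exact isUnit_iff_ne_zero.2 (ne_of_lt (by linarith : -8 * N < 0))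
  · funext j
    fin_cases j
    · show M.mulVec (fun i => wach v i p) 0 = p 0
      rw [hmv, e0, e0, e0, e0]
      show v 0 0 * wach v 0 p + v 1 0 * wach v 1 p + v 2 0 * wach v 2 p + v 3 0 * wach v 3 p = p 0
      rw [hwach0, hwach1, hwach2, hwach3]
      rw [show v 0 0 * (A0 * S1 * S2 / N) + v 1 0 * (A1 * S2 * S3 / N)
          + v 2 0 * (A2 * S3 * S0 / N) + v 3 0 * (A3 * S0 * S1 / N)
          = (v 0 0 * (A0 * S1 * S2) + v 1 0 * (A1 * S2 * S3)
            + v 2 0 * (A2 * S3 * S0) + v 3 0 * (A3 * S0 * S1)) / N from by ring]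
      rw [div_eq_iff hN.ne', hNdef, hA0def, hA1def, hA2def, hA3def,
        hS0def, hS1def, hS2def, hS3def]
      simp only [sArea]
      ring
    · show M.mulVec (fun i => wach v i p) 1 = p 1
      rw [hmv, e1, e1, e1, e1]
      show v 0 1 * wach v 0 p + v 1 1 * wach v 1 p + v 2 1 * wach v 2 p + v 3 1 * wach v 3 p = p 1
      rw [hwach0, hwach1, hwach2, hwach3]
      rw [show v 0 1 * (A0 * S1 * S2 / N) + v 1 1 * (A1 * S2 * S3 / N)
          + v 2 1 * (A2 * S3 * S0 / N) + v 3 1 * (A3 * S0 * S1 / N)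
          = (v 0 1 * (A0 * S1 * S2) + v 1 1 * (A1 * S2 * S3)
            + v 2 1 * (A2 * S3 * S0) + v 3 1 * (A3 * S0 * S1)) / N from by ring]
      rw [div_eq_iff hN.ne', hNdef, hA0def, hA1def, hA2def, hA3def,
        hS0def, hS1def, hS2def, hS3def]
      simp only [sArea]
      ring
    · show M.mulVec (fun i => wach v i p) 2 = 1
      rw [hmv, e2, e2, e2, e2]
      show 1 * wach v 0 p + 1 * wach v 1 p + 1 * wach v 2 p + 1 * wach v 3 p = 1
      rw [hwach0, hwach1, hwach2, hwach3]
      rw [show 1 * (A0 * S1 * S2 / N) + 1 * (A1 * S2 * S3 / N)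
          + 1 * (A2 * S3 * S0 / N) + 1 * (A3 * S0 * S1 / N)
          = (A0 * S1 * S2 + A1 * S2 * S3 + A2 * S3 * S0 + A3 * S0 * S1) / N from by ring]
      rw [← hNdef, div_self hN.ne']
    · show M.mulVec (fun i => wach v i p) 3 = 0
      rw [hmv, e30, e31, e32, e33]
      rw [hrho0, hrho1, hrho2, hrho3, hwach0, hwach1, hwach2, hwach3]
      rw [show 4 * (S3 * S0) * (A0 * S1 * S2 / N) + -(4 * (S0 * S1)) * (A1 * S2 * S3 / N)
          + 4 * (S1 * S2) * (A2 * S3 * S0 / N) + -(4 * (S2 * S3)) * (A3 * S0 * S1 / N)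
          = 4 * S0 * S1 * S2 * S3 * (A0 - A1 + A2 - A3) / N from by ring]
      rw [show A0 - A1 + A2 - A3 = 0 from by
        rw [hA0def, hA1def, hA2def, hA3def]; simp only [sArea]; ring]
      simp
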